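/- Let N ≥ 1, p > 1, 0 < α < 2, N < q₀ < N + αp, and R > 0. Set Φ_R(x) = (1+|x/R|²)^{-q₀/2}. Suppose that |(-Δ)Φ₁(x)| ≤ C⟨x⟩^{-N-2} and |(-Δ)^{α/2}Φ₁(x)| ≤ C⟨x⟩^{-N-α} for all x, where ⟨x⟩=(1+|x|²)^{1/2}. Then ∫_{ℝ^N} Φ_R(x)^{-1/(p-1)} |ℒΦ_R(x)|^{p/(p-1)} dx ≤ C' (R^{-2p/(p-1)+N} + R^{-αp/(p-1)+N}) for a constant C' independent of R, where ℒ = -Δ + (-Δ)^{α/2}. -/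
import Mathlib

open MeasureTheory

private lemma aux_rpow_add_le {x y z : ℝ} (hx : 0 ≤ x) (hy : 0 ≤ y) (hz : 0 ≤ z) :
    (x + y) ^ z ≤ 2 ^ z * (x ^ z + y ^ z) := by
  have hmax : x + y ≤ 2 * max x y := by
    rcases le_total x y with h | h
    · have := le_max_right x y; have := le_max_left x y; nlinarith
    · have := le_max_left x y; nlinarith
  calc (x + y) ^ z ≤ (2 * max x y) ^ z :=
        Real.rpow_le_rpow (by positivity) hmax hz
    _ = 2 ^ z * (max x y) ^ z :=
        Real.mul_rpow (by norm_num) (le_max_of_le_left hx)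
    _ ≤ 2 ^ z * (x ^ z + y ^ z) := by
        have : (max x y) ^ z ≤ x ^ z + y ^ z := by
          rcases le_total x y with h | h
          · rw [max_eq_right h]
            have := Real.rpow_nonneg hx z; linarith
          · rw [max_eq_left h]
            have := Real.rpow_nonneg hy z; linarith
        have h2 : (0:ℝ) ≤ 2 ^ z := Real.rpow_nonneg (by norm_num) z
        nlinarith

set_option maxHeartbeats 1600000 in
/-- Estimate on `∫ Φ_R^{-1/(p-1)} |ℒΦ_R|^{p/(p-1)}` for the rescaled Japanese bracket
`Φ_R(x) = (1+|x/R|²)^{-q₀/2}`, where `ℒ = -Δ + (-Δ)^{α/2}`.  The actions of the two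
pieces of the operator on `Φ₁` are encoded by functions `A = (-Δ)Φ₁` and
`B = (-Δ)^{α/2}Φ₁` satisfying the pointwise bounds of Lemma 3, and
`ℒΦ_R(x) = R^{-2} A(x/R) + R^{-α} B(x/R)` by the scaling identity. -/
theorem mixed_operator_test_function_estimate (N : ℕ) (hN : 1 ≤ N) (p α q₀ C : ℝ)
    (hp : 1 < p) (hα : 0 < α) (hα2 : α < 2) (hC : 0 < C)
    (hq₀ : (N : ℝ) < q₀) (hq₀' : q₀ < (N : ℝ) + α * p)
    (A B : EuclideanSpace ℝ (Fin N) → ℝ)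
    (hA : ∀ x, |A x| ≤ C * (1 + ‖x‖ ^ 2) ^ ((-(N : ℝ) - 2) / 2))
    (hB : ∀ x, |B x| ≤ C * (1 + ‖x‖ ^ 2) ^ ((-(N : ℝ) - α) / 2)) :
    ∃ C' : ℝ, 0 < C' ∧ ∀ R : ℝ, 0 < R →
      (∫ x : EuclideanSpace ℝ (Fin N),
          ((1 + ‖R⁻¹ • x‖ ^ 2) ^ (-q₀ / 2)) ^ (-(1 / (p - 1))) *
            |R ^ (-(2 : ℝ)) * A (R⁻¹ • x) + R ^ (-α) * B (R⁻¹ • x)| ^ (p / (p - 1)))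
        ≤ C' * (R ^ (-(2 * p) / (p - 1) + (N : ℝ)) + R ^ (-(α * p) / (p - 1) + (N : ℝ))) := by
  have hp1 : (0:ℝ) < p - 1 := by linarith
  have hppos : (0:ℝ) < p := by linarith
  set p' : ℝ := p / (p - 1) with hp'
  have hp'pos : 0 < p' := div_pos hppos hp1
  set d : ℝ := -q₀ / 2 * -(1 / (p - 1)) with hd
  set e2 : ℝ := (-(N : ℝ) - 2) / 2 with he2
  set eα : ℝ := (-(N : ℝ) - α) / 2 with heα
  set c2 : ℝ := d + e2 * p' with hc2
  set cα : ℝ := d + eα * p' with hcα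
  have hαp : α * p < 2 * p := mul_lt_mul_of_pos_right hα2 hppos
  have hc2' : (N : ℝ) < -(2 * c2) := by
    have key : -(2 * c2) - (N : ℝ) = (((N : ℝ) + 2) * p - q₀ - (N : ℝ) * (p - 1)) / (p - 1) := by
      rw [hc2, hd, he2, hp']; field_simp; ring
    have hnum : 0 < ((N : ℝ) + 2) * p - q₀ - (N : ℝ) * (p - 1) := by nlinarith
    have := div_pos hnum hp1
    linarith
  have hcα' : (N : ℝ) < -(2 * cα) := by
    have key : -(2 * cα) - (N : ℝ) = (((N : ℝ) + α) * p - q₀ - (N : ℝ) * (p - 1)) / (p - 1) := by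
      rw [hcα, hd, heα, hp']; field_simp; ring
    have hnum : 0 < ((N : ℝ) + α) * p - q₀ - (N : ℝ) * (p - 1) := by nlinarith
    have := div_pos hnum hp1
    linarith
  have hint : ∀ c : ℝ, (N : ℝ) < -(2 * c) →
      Integrable (fun y : EuclideanSpace ℝ (Fin N) => (1 + ‖y‖ ^ 2) ^ c) := by
    intro c hc
    have h := integrable_rpow_neg_one_add_norm_sq (E := EuclideanSpace ℝ (Fin N))
      (μ := volume) (r := -(2 * c)) (by simpa [finrank_euclideanSpace_fin] using hc)
    have he : -(-(2 * c)) / 2 = c := by ring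
    simpa [he] using h
  set J2 : ℝ := ∫ y : EuclideanSpace ℝ (Fin N), (1 + ‖y‖ ^ 2) ^ c2 with hJ2
  set Jα : ℝ := ∫ y : EuclideanSpace ℝ (Fin N), (1 + ‖y‖ ^ 2) ^ cα with hJα
  have hJ2nn : 0 ≤ J2 := integral_nonneg fun y => Real.rpow_nonneg (by positivity) _
  have hJαnn : 0 ≤ Jα := integral_nonneg fun y => Real.rpow_nonneg (by positivity) _
  set K : ℝ := 2 ^ p' * C ^ p' with hK
  have hKpos : 0 < K := by
    have h1 := Real.rpow_pos_of_pos (show (0:ℝ) < 2 by norm_num) p'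
    have h2 := Real.rpow_pos_of_pos hC p'
    positivity
  refine ⟨K * (J2 + Jα) + 1, by positivity, ?_⟩
  intro R hR
  have hR2 : (0:ℝ) < R ^ (-(2:ℝ)) := Real.rpow_pos_of_pos hR _
  have hRα : (0:ℝ) < R ^ (-α) := Real.rpow_pos_of_pos hR _
  set g : EuclideanSpace ℝ (Fin N) → ℝ := fun x =>
    2 ^ p' * (C ^ p' * R ^ (-(2:ℝ) * p') * (1 + ‖R⁻¹ • x‖ ^ 2) ^ c2 +
      C ^ p' * R ^ (-α * p') * (1 + ‖R⁻¹ • x‖ ^ 2) ^ cα) with hg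
  have hg0 : ∀ x, 0 ≤ g x := by
    intro x
    have h1 : (0:ℝ) ≤ (1 + ‖R⁻¹ • x‖ ^ 2) ^ c2 := Real.rpow_nonneg (by positivity) _
    have h2 : (0:ℝ) ≤ (1 + ‖R⁻¹ • x‖ ^ 2) ^ cα := Real.rpow_nonneg (by positivity) _
    have h3 : (0:ℝ) ≤ R ^ (-(2:ℝ) * p') := Real.rpow_nonneg hR.le _
    have h4 : (0:ℝ) ≤ R ^ (-α * p') := Real.rpow_nonneg hR.le _
    have h5 : (0:ℝ) ≤ (2:ℝ) ^ p' := Real.rpow_nonneg (by norm_num) _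
    have h6 : (0:ℝ) ≤ C ^ p' := Real.rpow_nonneg hC.le _
    rw [hg]; positivity
  have hginta : Integrable (fun x : EuclideanSpace ℝ (Fin N) =>
      C ^ p' * R ^ (-(2:ℝ) * p') * (1 + ‖R⁻¹ • x‖ ^ 2) ^ c2) := by
    exact (((integrable_comp_smul_iff volume
      (fun y : EuclideanSpace ℝ (Fin N) => (1 + ‖y‖ ^ 2) ^ c2)
      (inv_ne_zero hR.ne')).2 (hint c2 hc2')).const_mul _)
  have hgintb : Integrable (fun x : EuclideanSpace ℝ (Fin N) =>
      C ^ p' * R ^ (-α * p') * (1 + ‖R⁻¹ • x‖ ^ 2) ^ cα) := by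
    exact (((integrable_comp_smul_iff volume
      (fun y : EuclideanSpace ℝ (Fin N) => (1 + ‖y‖ ^ 2) ^ cα)
      (inv_ne_zero hR.ne')).2 (hint cα hcα')).const_mul _)
  have hgint : Integrable g := by
    rw [hg]; exact (hginta.add hgintb).const_mul _
  have hfg : ∀ x : EuclideanSpace ℝ (Fin N),
      ((1 + ‖R⁻¹ • x‖ ^ 2) ^ (-q₀ / 2)) ^ (-(1 / (p - 1))) *
        |R ^ (-(2 : ℝ)) * A (R⁻¹ • x) + R ^ (-α) * B (R⁻¹ • x)| ^ p' ≤ g x := by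
    intro x
    set u : ℝ := 1 + ‖R⁻¹ • x‖ ^ 2 with hu
    have hu0 : (0:ℝ) < u := by
      have := sq_nonneg ‖R⁻¹ • x‖; rw [hu]; nlinarith
    have hfirst : (u ^ (-q₀ / 2)) ^ (-(1 / (p - 1))) = u ^ d := by
      rw [hd]; exact (Real.rpow_mul hu0.le _ _).symm
    have habs : |R ^ (-(2:ℝ)) * A (R⁻¹ • x) + R ^ (-α) * B (R⁻¹ • x)| ≤
        C * R ^ (-(2:ℝ)) * u ^ e2 + C * R ^ (-α) * u ^ eα := by
      have hAx := hA (R⁻¹ • x)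
      have hBx := hB (R⁻¹ • x)
      rw [← hu] at hAx hBx
      calc |R ^ (-(2:ℝ)) * A (R⁻¹ • x) + R ^ (-α) * B (R⁻¹ • x)|
          ≤ |R ^ (-(2:ℝ)) * A (R⁻¹ • x)| + |R ^ (-α) * B (R⁻¹ • x)| := abs_add_le _ _
        _ = R ^ (-(2:ℝ)) * |A (R⁻¹ • x)| + R ^ (-α) * |B (R⁻¹ • x)| := by
            rw [abs_mul, abs_mul, abs_of_pos hR2, abs_of_pos hRα]
        _ ≤ R ^ (-(2:ℝ)) * (C * u ^ e2) + R ^ (-α) * (C * u ^ eα) :=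
            add_le_add (mul_le_mul_of_nonneg_left hAx hR2.le)
              (mul_le_mul_of_nonneg_left hBx hRα.le)
        _ = C * R ^ (-(2:ℝ)) * u ^ e2 + C * R ^ (-α) * u ^ eα := by ring
    have hpow : |R ^ (-(2:ℝ)) * A (R⁻¹ • x) + R ^ (-α) * B (R⁻¹ • x)| ^ p' ≤
        (C * R ^ (-(2:ℝ)) * u ^ e2 + C * R ^ (-α) * u ^ eα) ^ p' :=
      Real.rpow_le_rpow (abs_nonneg _) habs hp'pos.le
    have hue2 : (0:ℝ) ≤ u ^ e2 := Real.rpow_nonneg hu0.le _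
    have hueα : (0:ℝ) ≤ u ^ eα := Real.rpow_nonneg hu0.le _
    have hsplit : (C * R ^ (-(2:ℝ)) * u ^ e2 + C * R ^ (-α) * u ^ eα) ^ p' ≤
        2 ^ p' * ((C * R ^ (-(2:ℝ)) * u ^ e2) ^ p' + (C * R ^ (-α) * u ^ eα) ^ p') :=
      aux_rpow_add_le (by positivity) (by positivity) hp'pos.le
    have hterm2 : (C * R ^ (-(2:ℝ)) * u ^ e2) ^ p' =
        C ^ p' * R ^ (-(2:ℝ) * p') * u ^ (e2 * p') := by
      rw [Real.mul_rpow (by positivity) hue2, Real.mul_rpow hC.le hR2.le,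
        ← Real.rpow_mul hR.le, ← Real.rpow_mul hu0.le]
    have htermα : (C * R ^ (-α) * u ^ eα) ^ p' =
        C ^ p' * R ^ (-α * p') * u ^ (eα * p') := by
      rw [Real.mul_rpow (by positivity) hueα, Real.mul_rpow hC.le hRα.le,
        ← Real.rpow_mul hR.le, ← Real.rpow_mul hu0.le]
    rw [hterm2, htermα] at hsplit
    have hud : (0:ℝ) ≤ u ^ d := Real.rpow_nonneg hu0.le _
    calc (u ^ (-q₀ / 2)) ^ (-(1 / (p - 1))) *
          |R ^ (-(2:ℝ)) * A (R⁻¹ • x) + R ^ (-α) * B (R⁻¹ • x)| ^ p'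
        = u ^ d * |R ^ (-(2:ℝ)) * A (R⁻¹ • x) + R ^ (-α) * B (R⁻¹ • x)| ^ p' := by
          rw [hfirst]
      _ ≤ u ^ d * (2 ^ p' * (C ^ p' * R ^ (-(2:ℝ) * p') * u ^ (e2 * p') +
            C ^ p' * R ^ (-α * p') * u ^ (eα * p'))) :=
          mul_le_mul_of_nonneg_left (hpow.trans hsplit) hud
      _ = 2 ^ p' * (C ^ p' * R ^ (-(2:ℝ) * p') * u ^ c2 +
            C ^ p' * R ^ (-α * p') * u ^ cα) := by
          rw [hc2, hcα, Real.rpow_add hu0, Real.rpow_add hu0]; ring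
      _ = g x := by rw [hg]
  have hmono : (∫ x : EuclideanSpace ℝ (Fin N),
      ((1 + ‖R⁻¹ • x‖ ^ 2) ^ (-q₀ / 2)) ^ (-(1 / (p - 1))) *
        |R ^ (-(2 : ℝ)) * A (R⁻¹ • x) + R ^ (-α) * B (R⁻¹ • x)| ^ p')
      ≤ ∫ x, g x := by
    refine integral_mono_of_nonneg (Filter.Eventually.of_forall fun x => ?_) hgint
      (Filter.Eventually.of_forall hfg)
    have h1 : (0:ℝ) ≤ ((1 + ‖R⁻¹ • x‖ ^ 2) ^ (-q₀ / 2)) ^ (-(1 / (p - 1))) :=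
      Real.rpow_nonneg (Real.rpow_nonneg (by positivity) _) _
    have h2 : (0:ℝ) ≤ |R ^ (-(2 : ℝ)) * A (R⁻¹ • x) + R ^ (-α) * B (R⁻¹ • x)| ^ p' :=
      Real.rpow_nonneg (abs_nonneg _) _
    positivity
  have hcv : ∀ c : ℝ, (∫ x : EuclideanSpace ℝ (Fin N), (1 + ‖R⁻¹ • x‖ ^ 2) ^ c) =
      R ^ (N : ℕ) * ∫ y : EuclideanSpace ℝ (Fin N), (1 + ‖y‖ ^ 2) ^ c := by
    intro c
    rw [Measure.integral_comp_inv_smul volume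
      (fun y : EuclideanSpace ℝ (Fin N) => (1 + ‖y‖ ^ 2) ^ c) R,
      finrank_euclideanSpace_fin, abs_of_pos (pow_pos hR N), smul_eq_mul]
  have hgval : (∫ x, g x) = K * J2 * R ^ (-(2:ℝ) * p' + (N:ℝ)) +
      K * Jα * R ^ (-α * p' + (N:ℝ)) := by
    rw [hg]
    rw [integral_const_mul, integral_add hginta hgintb, integral_const_mul,
      integral_const_mul, hcv c2, hcv cα, ← hJ2, ← hJα]
    rw [Real.rpow_add hR, Real.rpow_add hR, Real.rpow_natCast, hK]
    ring
  have hexp2 : -(2:ℝ) * p' + (N:ℝ) = -(2 * p) / (p - 1) + (N:ℝ) := by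
    rw [hp']; ring
  have hexpα : -α * p' + (N:ℝ) = -(α * p) / (p - 1) + (N:ℝ) := by
    rw [hp']; ring
  have hRa : (0:ℝ) < R ^ (-(2 * p) / (p - 1) + (N:ℝ)) := Real.rpow_pos_of_pos hR _
  have hRb : (0:ℝ) < R ^ (-(α * p) / (p - 1) + (N:ℝ)) := Real.rpow_pos_of_pos hR _
  calc (∫ x : EuclideanSpace ℝ (Fin N),
          ((1 + ‖R⁻¹ • x‖ ^ 2) ^ (-q₀ / 2)) ^ (-(1 / (p - 1))) *
            |R ^ (-(2 : ℝ)) * A (R⁻¹ • x) + R ^ (-α) * B (R⁻¹ • x)| ^ p')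
      ≤ ∫ x, g x := hmono
    _ = K * J2 * R ^ (-(2 * p) / (p - 1) + (N:ℝ)) +
        K * Jα * R ^ (-(α * p) / (p - 1) + (N:ℝ)) := by
        rw [hgval, hexp2, hexpα]
    _ ≤ (K * (J2 + Jα) + 1) * (R ^ (-(2 * p) / (p - 1) + (N:ℝ)) +
        R ^ (-(α * p) / (p - 1) + (N:ℝ))) := by
        have h1 : K * J2 ≤ K * (J2 + Jα) + 1 := by nlinarith
        have h2 : K * Jα ≤ K * (J2 + Jα) + 1 := by nlinarith
        have h3 := mul_le_mul_of_nonneg_right h1 hRa.le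
        have h4 := mul_le_mul_of_nonneg_right h2 hRb.le
        nlinarith [mul_pos (show (0:ℝ) < K * (J2 + Jα) + 1 by nlinarith) hRa,
          mul_pos (show (0:ℝ) < K * (J2 + Jα) + 1 by nlinarith) hRb]
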